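/- arXiv:2110.01648 — 2 statements merged into one kernel-verified Lean document; each statement's English description precedes it below -/
import Mathlib

section
/- Let ℓ : ℝ → ℝ be convex and differentiable with derivative ℓ' not identically zero and E_{w∼N(0,1)}|ℓ'(w·s + m)| < ∞ for all m, s. Then for any m ∈ ℝ, the function s ↦ E_{w∼N(0,1)}[ℓ(m + w·s)] is strictly increasing on (0, ∞); specifically its derivative equals ∫_0^∞ w[ℓ'(m + ws) - ℓ'(m - ws)]·φ(w) dw > 0, where φ is the standard normal density, provided ℓ' is strictly increasing at some point reached with positive measure. -/
open MeasureTheory ProbabilityTheory Real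
open scoped ENNReal NNReal

lemma gauss_int_iff (f : ℝ → ℝ) :
    Integrable f (gaussianReal 0 1) ↔
      Integrable (fun w => f w * gaussianPDFReal 0 1 w) volume := by
  rw [gaussianReal_of_var_ne_zero 0 one_ne_zero,
    integrable_withDensity_iff (measurable_gaussianPDF 0 1)
      (Filter.Eventually.of_forall fun x => ENNReal.ofReal_lt_top)]
  simp_rw [gaussianPDF, ENNReal.toReal_ofReal (gaussianPDFReal_nonneg 0 1 _)]

lemma gauss_integral_eq (f : ℝ → ℝ) :
    ∫ w, f w ∂(gaussianReal 0 1) = ∫ w, f w * gaussianPDFReal 0 1 w := by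
  rw [gaussianReal_of_var_ne_zero 0 one_ne_zero]
  have h : gaussianPDF 0 1 = fun x => ((gaussianPDFReal 0 1 x).toNNReal : ℝ≥0∞) := by
    funext x; rfl
  rw [h, integral_withDensity_eq_integral_smul (measurable_gaussianPDFReal 0 1).real_toNNReal]
  congr 1; funext w
  rw [NNReal.smul_def, smul_eq_mul, Real.coe_toNNReal _ (gaussianPDFReal_nonneg 0 1 w), mul_comm]

lemma gaussianPDFReal_eq (x : ℝ) :
    gaussianPDFReal 0 1 x = (Real.sqrt (2*π))⁻¹ * Real.exp (-x^2/2) := by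
  simp [gaussianPDFReal]

lemma gauss_pdf_even (w : ℝ) : gaussianPDFReal 0 1 (-w) = gaussianPDFReal 0 1 w := by
  rw [gaussianPDFReal_eq, gaussianPDFReal_eq, neg_sq]

lemma integrable_abs_mul (f : ℝ → ℝ) (hf : Measurable f)
    (h : Integrable (fun w => |f (Real.sqrt 2 * w)|) (gaussianReal 0 1)) :
    Integrable (fun w => |w| * |f w|) (gaussianReal 0 1) := by
  have hs2 : Real.sqrt 2 ≠ 0 := by positivity
  rw [gauss_int_iff] at h ⊢
  have h2 : Integrable (fun w => |f (Real.sqrt 2 * ((Real.sqrt 2)⁻¹ * w))| *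
      gaussianPDFReal 0 1 ((Real.sqrt 2)⁻¹ * w)) volume :=
    (integrable_comp_mul_left_iff _ (inv_ne_zero hs2)).2 h
  simp_rw [mul_inv_cancel_left₀ hs2] at h2
  refine h2.mono ?_ (Filter.Eventually.of_forall fun w => ?_)
  · exact ((measurable_id'.abs.mul hf.abs).mul
      (measurable_gaussianPDFReal 0 1)).aestronglyMeasurable
  · have hc : (0:ℝ) < (Real.sqrt (2*π))⁻¹ := by positivity
    rw [Real.norm_eq_abs, Real.norm_eq_abs,
      abs_of_nonneg (mul_nonneg (mul_nonneg (abs_nonneg _) (abs_nonneg _))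
        (gaussianPDFReal_nonneg 0 1 w)),
      abs_of_nonneg (mul_nonneg (abs_nonneg _) (gaussianPDFReal_nonneg 0 1 _))]
    rw [gaussianPDFReal_eq, gaussianPDFReal_eq]
    have hsq : ((Real.sqrt 2)⁻¹ * w)^2 = w^2/2 := by
      rw [mul_pow, inv_pow, Real.sq_sqrt (by norm_num : (0:ℝ) ≤ 2)]; ring
    rw [hsq]
    have h1 : |w| ≤ Real.exp (w^2/4) := by
      have := Real.add_one_le_exp (w^2/4)
      nlinarith [sq_nonneg (|w| - 2), sq_abs w]
    have key : |w| * Real.exp (-w^2/2) ≤ Real.exp (-(w^2/2)/2) := by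
      calc |w| * Real.exp (-w^2/2) ≤ Real.exp (w^2/4) * Real.exp (-w^2/2) :=
            mul_le_mul_of_nonneg_right h1 (Real.exp_nonneg _)
        _ = Real.exp (-(w^2/2)/2) := by rw [← Real.exp_add]; ring_nf
    calc |w| * |f w| * ((Real.sqrt (2*π))⁻¹ * Real.exp (-w^2/2))
        = |f w| * (Real.sqrt (2*π))⁻¹ * (|w| * Real.exp (-w^2/2)) := by ring
      _ ≤ |f w| * (Real.sqrt (2*π))⁻¹ * Real.exp (-(w^2/2)/2) := by
          exact mul_le_mul_of_nonneg_left key (by positivity)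
      _ = |f w| * ((Real.sqrt (2*π))⁻¹ * Real.exp (-(w^2/2)/2)) := by ring

lemma abs_sub_le_deriv_aux (ℓ : ℝ → ℝ) (hconv : ConvexOn ℝ Set.univ ℓ)
    (hdiff : ∀ x : ℝ, HasDerivAt ℓ (deriv ℓ x) x) {a b : ℝ} (h : a < b) :
    |ℓ b - ℓ a| ≤ |b - a| * (|deriv ℓ a| + |deriv ℓ b|) := by
  have h1 := hconv.deriv_le_slope (Set.mem_univ a) (Set.mem_univ b) h (hdiff a).differentiableAt
  have h2 := hconv.slope_le_deriv (Set.mem_univ a) (Set.mem_univ b) h (hdiff b).differentiableAt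
  rw [slope_def_field] at h1 h2
  have hba : (0:ℝ) < b - a := sub_pos.2 h
  have e1 : deriv ℓ a * (b - a) ≤ ℓ b - ℓ a := by
    have := (le_div_iff₀ hba).1 h1; linarith
  have e2 : ℓ b - ℓ a ≤ deriv ℓ b * (b - a) := by
    have := (div_le_iff₀ hba).1 h2; linarith
  rw [abs_of_pos hba, abs_le]
  constructor
  · nlinarith [neg_abs_le (deriv ℓ a), abs_nonneg (deriv ℓ b)]
  · nlinarith [le_abs_self (deriv ℓ b), abs_nonneg (deriv ℓ a)]

lemma abs_sub_le_deriv (ℓ : ℝ → ℝ) (hconv : ConvexOn ℝ Set.univ ℓ)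
    (hdiff : ∀ x : ℝ, HasDerivAt ℓ (deriv ℓ x) x) (a b : ℝ) :
    |ℓ b - ℓ a| ≤ |b - a| * (|deriv ℓ a| + |deriv ℓ b|) := by
  rcases lt_trichotomy a b with h | h | h
  · exact abs_sub_le_deriv_aux ℓ hconv hdiff h
  · simp [h]
  · have := abs_sub_le_deriv_aux ℓ hconv hdiff h
    rw [abs_sub_comm (ℓ a), abs_sub_comm a, add_comm] at this
    exact this

lemma key_int (ℓ : ℝ → ℝ)
    (hint : ∀ m s : ℝ, Integrable (fun w => |deriv ℓ (m + w * s)|) (gaussianReal 0 1))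
    (m s : ℝ) :
    Integrable (fun w => |w| * |deriv ℓ (m + w * s)|) (gaussianReal 0 1) := by
  apply integrable_abs_mul (fun w => deriv ℓ (m + w * s))
  · exact (measurable_deriv ℓ).comp (measurable_const.add (measurable_id.mul_const s))
  · have h := hint m (Real.sqrt 2 * s)
    simp_rw [show ∀ w : ℝ, m + w * (Real.sqrt 2 * s) = m + Real.sqrt 2 * w * s from
      fun w => by ring] at h
    exact h

lemma integrable_abs_id : Integrable (fun w : ℝ => |w|) (gaussianReal 0 1) := by
  have h := integrable_abs_mul (fun _ => 1) measurable_const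
    (by simpa using (integrable_const 1 : Integrable (fun _ : ℝ => (1:ℝ)) (gaussianReal 0 1)))
  simpa using h

lemma integrable_loss (ℓ : ℝ → ℝ) (hconv : ConvexOn ℝ Set.univ ℓ)
    (hdiff : ∀ x : ℝ, HasDerivAt ℓ (deriv ℓ x) x)
    (hint : ∀ m s : ℝ, Integrable (fun w => |deriv ℓ (m + w * s)|) (gaussianReal 0 1))
    (m s : ℝ) : Integrable (fun w => ℓ (m + w * s)) (gaussianReal 0 1) := by
  have hcont : Continuous ℓ := by
    apply continuous_iff_continuousAt.2 fun x => (hdiff x).continuousAt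
  have hder := key_int ℓ hint m s
  have habs := integrable_abs_id
  refine Integrable.mono'
    (g := fun w => |ℓ m| + |s| * |deriv ℓ m| * |w| + |s| * (|w| * |deriv ℓ (m + w * s)|))
    (((integrable_const _).add ((habs.const_mul _))).add (hder.const_mul _))
    ((hcont.comp (continuous_const.add (continuous_id.mul continuous_const))).aestronglyMeasurable)
    (Filter.Eventually.of_forall fun w => ?_)
  have h := abs_sub_le_deriv ℓ hconv hdiff m (m + w * s)
  have h2 : |ℓ (m + w * s)| - |ℓ m| ≤ |ℓ (m + w * s) - ℓ m| := abs_sub_abs_le_abs_sub _ _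
  have h3 : |m + w * s - m| = |w| * |s| := by
    rw [show m + w * s - m = w * s from by ring, abs_mul]
  rw [Real.norm_eq_abs]
  rw [h3] at h
  show |ℓ (m + w * s)| ≤ |ℓ m| + |s| * |deriv ℓ m| * |w| + |s| * (|w| * |deriv ℓ (m + w * s)|)
  nlinarith [abs_nonneg w, abs_nonneg s, abs_nonneg (deriv ℓ m), abs_nonneg (deriv ℓ (m + w*s))]


/-- For a convex differentiable loss `ℓ` whose derivative is integrable against the
Gaussian and not constant, the Gaussian-smoothed loss `s ↦ E_{w∼N(0,1)}[ℓ(m + w·s)]`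
is strictly increasing on `(0,∞)`, with derivative
`∫_0^∞ w·(ℓ'(m+ws) - ℓ'(m-ws))·φ(w) dw > 0`. -/
theorem gaussian_smoothed_loss_strictMono_in_scale
    (ℓ : ℝ → ℝ) (hconv : ConvexOn ℝ Set.univ ℓ)
    (hdiff : ∀ x : ℝ, HasDerivAt ℓ (deriv ℓ x) x)
    (hint : ∀ m s : ℝ, Integrable (fun w => |deriv ℓ (m + w * s)|) (gaussianReal 0 1))
    (hnc : ∃ x y : ℝ, x < y ∧ deriv ℓ x < deriv ℓ y)
    (m : ℝ) :
    StrictMonoOn (fun s : ℝ => ∫ w, ℓ (m + w * s) ∂(gaussianReal 0 1)) (Set.Ioi 0) ∧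
    ∀ s : ℝ, 0 < s →
      HasDerivAt (fun s : ℝ => ∫ w, ℓ (m + w * s) ∂(gaussianReal 0 1))
        (∫ w in Set.Ioi (0:ℝ),
          w * (deriv ℓ (m + w * s) - deriv ℓ (m - w * s)) * gaussianPDFReal 0 1 w) s ∧
      0 < ∫ w in Set.Ioi (0:ℝ),
          w * (deriv ℓ (m + w * s) - deriv ℓ (m - w * s)) * gaussianPDFReal 0 1 w := by
  have hmono : Monotone (deriv ℓ) :=
    monotoneOn_univ.1 (hconv.monotoneOn_deriv fun x _ => (hdiff x).differentiableAt)
  have hcont : Continuous ℓ := continuous_iff_continuousAt.2 fun x => (hdiff x).continuousAt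
  have key := key_int ℓ hint m
  -- volume integrability of the derivative integrand
  have hIntVol : ∀ s : ℝ,
      Integrable (fun w => w * deriv ℓ (m + w * s) * gaussianPDFReal 0 1 w) volume := by
    intro s
    have h := (gauss_int_iff _).1 (key s)
    refine h.mono' ?_ (Filter.Eventually.of_forall fun w => ?_)
    · exact ((measurable_id'.mul ((measurable_deriv ℓ).comp
        (measurable_const.add (measurable_id.mul_const s)))).mul
        (measurable_gaussianPDFReal 0 1)).aestronglyMeasurable
    · rw [Real.norm_eq_abs, abs_mul, abs_mul,
        abs_of_nonneg (gaussianPDFReal_nonneg 0 1 w)]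
  have hγint : ∀ s : ℝ,
      Integrable (fun w => w * deriv ℓ (m + w * s)) (gaussianReal 0 1) :=
    fun s => (gauss_int_iff _).2 (hIntVol s)
  -- integrability on Ioi of the reflected integrand
  have hIoiRefl : ∀ s : ℝ, IntegrableOn
      (fun w => w * deriv ℓ (m - w * s) * gaussianPDFReal 0 1 w) (Set.Ioi (0:ℝ)) volume := by
    intro s
    have h := (hIntVol (-s)).integrableOn (s := Set.Ioi (0:ℝ))
    simp_rw [show ∀ w : ℝ, m + w * (-s) = m - w * s from fun w => by ring] at h
    exact h
  -- derivative of the smoothed loss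
  have hD : ∀ s : ℝ, 0 < s →
      HasDerivAt (fun s : ℝ => ∫ w, ℓ (m + w * s) ∂(gaussianReal 0 1))
        (∫ w, w * deriv ℓ (m + w * s) ∂(gaussianReal 0 1)) s := by
    intro s₀ hs₀
    have hεpos : (0:ℝ) < s₀ / 2 := by linarith
    refine (hasDerivAt_integral_of_dominated_loc_of_deriv_le (μ := gaussianReal 0 1)
      (F := fun s w => ℓ (m + w * s)) (F' := fun s w => w * deriv ℓ (m + w * s))
      (bound := fun w => |w| * |deriv ℓ (m + w * (s₀/2))| + |w| * |deriv ℓ (m + w * (3*s₀/2))|)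
      (Metric.ball_mem_nhds s₀ hεpos) ?_ ?_ ?_ ?_ ?_ ?_).2
    · exact Filter.Eventually.of_forall fun s =>
        (hcont.comp (continuous_const.add (continuous_id.mul continuous_const))).aestronglyMeasurable
    · exact integrable_loss ℓ hconv hdiff hint m s₀
    · exact (measurable_id'.mul ((measurable_deriv ℓ).comp
        (measurable_const.add (measurable_id.mul_const s₀)))).aestronglyMeasurable
    · refine Filter.Eventually.of_forall fun w s hs => ?_
      rw [Metric.mem_ball, Real.dist_eq, abs_lt] at hs
      have hs1 : s₀ / 2 ≤ s := by linarith [hs.1]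
      have hs2 : s ≤ 3 * s₀ / 2 := by linarith [hs.2]
      rw [Real.norm_eq_abs, abs_mul]
      have hb : |deriv ℓ (m + w * s)| ≤
          |deriv ℓ (m + w * (s₀/2))| + |deriv ℓ (m + w * (3*s₀/2))| := by
        rcases le_or_gt 0 w with hw | hw
        · have l1 : deriv ℓ (m + w * (s₀/2)) ≤ deriv ℓ (m + w * s) :=
            hmono (by nlinarith)
          have l2 : deriv ℓ (m + w * s) ≤ deriv ℓ (m + w * (3*s₀/2)) :=
            hmono (by nlinarith)
          rw [abs_le]
          constructor
          · nlinarith [neg_abs_le (deriv ℓ (m + w * (s₀/2))),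
              abs_nonneg (deriv ℓ (m + w * (3*s₀/2)))]
          · nlinarith [le_abs_self (deriv ℓ (m + w * (3*s₀/2))),
              abs_nonneg (deriv ℓ (m + w * (s₀/2)))]
        · have l1 : deriv ℓ (m + w * (3*s₀/2)) ≤ deriv ℓ (m + w * s) :=
            hmono (by nlinarith)
          have l2 : deriv ℓ (m + w * s) ≤ deriv ℓ (m + w * (s₀/2)) :=
            hmono (by nlinarith)
          rw [abs_le]
          constructor
          · nlinarith [neg_abs_le (deriv ℓ (m + w * (3*s₀/2))),
              abs_nonneg (deriv ℓ (m + w * (s₀/2)))]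
          · nlinarith [le_abs_self (deriv ℓ (m + w * (s₀/2))),
              abs_nonneg (deriv ℓ (m + w * (3*s₀/2)))]
      calc |w| * |deriv ℓ (m + w * s)|
          ≤ |w| * (|deriv ℓ (m + w * (s₀/2))| + |deriv ℓ (m + w * (3*s₀/2))|) :=
            mul_le_mul_of_nonneg_left hb (abs_nonneg w)
        _ = |w| * |deriv ℓ (m + w * (s₀/2))| + |w| * |deriv ℓ (m + w * (3*s₀/2))| := by ring
    · exact (key (s₀/2)).add (key (3*s₀/2))
    · refine Filter.Eventually.of_forall fun w s _ => ?_
      have h1 : HasDerivAt (fun s : ℝ => m + w * s) w s := by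
        simpa using ((hasDerivAt_id' s).const_mul w).const_add m
      have := (hdiff (m + w * s)).comp s h1
      simpa [Function.comp_def, mul_comm] using this
  -- rewriting the derivative as a half-line integral
  have hEq : ∀ s : ℝ,
      (∫ w, w * deriv ℓ (m + w * s) ∂(gaussianReal 0 1)) =
        ∫ w in Set.Ioi (0:ℝ),
          w * (deriv ℓ (m + w * s) - deriv ℓ (m - w * s)) * gaussianPDFReal 0 1 w := by
    intro s
    rw [gauss_integral_eq]
    rw [← intervalIntegral.integral_Iic_add_Ioi ((hIntVol s).integrableOn) ((hIntVol s).integrableOn)]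
    have e1 : (∫ w in Set.Iic (0:ℝ), w * deriv ℓ (m + w * s) * gaussianPDFReal 0 1 w)
        = -∫ w in Set.Ioi (0:ℝ), w * deriv ℓ (m - w * s) * gaussianPDFReal 0 1 w := by
      have hc := integral_comp_neg_Ioi (0:ℝ)
        (fun w => w * deriv ℓ (m + w * s) * gaussianPDFReal 0 1 w)
      rw [neg_zero] at hc
      rw [← hc, ← integral_neg]
      refine setIntegral_congr_fun measurableSet_Ioi fun w _ => ?_
      rw [gauss_pdf_even, show m + -w * s = m - w * s from by ring]
      ring
    rw [e1, neg_add_eq_sub, ← integral_sub ((hIntVol s).integrableOn) (hIoiRefl s)]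
    refine setIntegral_congr_fun measurableSet_Ioi fun w _ => ?_
    ring
  -- positivity
  have hpos : ∀ s : ℝ, 0 < s →
      0 < ∫ w in Set.Ioi (0:ℝ),
        w * (deriv ℓ (m + w * s) - deriv ℓ (m - w * s)) * gaussianPDFReal 0 1 w := by
    intro s hs
    obtain ⟨x, y, hxy, hlt⟩ := hnc
    have hInt : IntegrableOn
        (fun w => w * (deriv ℓ (m + w * s) - deriv ℓ (m - w * s)) * gaussianPDFReal 0 1 w)
        (Set.Ioi (0:ℝ)) volume := by
      have h : IntegrableOn (fun w =>
          w * deriv ℓ (m + w * s) * gaussianPDFReal 0 1 w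
            - w * deriv ℓ (m - w * s) * gaussianPDFReal 0 1 w) (Set.Ioi (0:ℝ)) volume :=
        ((hIntVol s).integrableOn (s := Set.Ioi (0:ℝ))).sub (hIoiRefl s)
      refine h.congr_fun (fun w _ => by ring) measurableSet_Ioi
    rw [setIntegral_pos_iff_support_of_nonneg_ae ?_ hInt]
    · set W := max (max ((y - m)/s) ((m - x)/s)) 0 with hW
      have hsub : Set.Ioi W ⊆ Function.support
          (fun w => w * (deriv ℓ (m + w * s) - deriv ℓ (m - w * s)) * gaussianPDFReal 0 1 w)
          ∩ Set.Ioi 0 := by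
        intro w hw
        rw [Set.mem_Ioi] at hw
        have hw0 : 0 < w := lt_of_le_of_lt (le_max_right _ _) hw
        have h1 : y ≤ m + w * s := by
          have h' : (y - m)/s < w :=
            lt_of_le_of_lt ((le_max_left _ _).trans (le_max_left _ _)) hw
          have := (div_lt_iff₀ hs).1 h'
          linarith
        have h2 : m - w * s ≤ x := by
          have h' : (m - x)/s < w :=
            lt_of_le_of_lt ((le_max_right _ _).trans (le_max_left _ _)) hw
          have := (div_lt_iff₀ hs).1 h'
          linarith
        have hd : 0 < deriv ℓ (m + w * s) - deriv ℓ (m - w * s) := by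
          have a1 := hmono h1
          have a2 := hmono h2
          linarith
        refine ⟨?_, hw0⟩
        simp only [Function.mem_support]
        exact ne_of_gt (mul_pos (mul_pos hw0 hd) (gaussianPDFReal_pos 0 1 w one_ne_zero))
      refine lt_of_lt_of_le ?_ (measure_mono hsub)
      rw [Real.volume_Ioi]
      simp
    · refine (ae_restrict_iff' measurableSet_Ioi).2 (Filter.Eventually.of_forall fun w hw => ?_)
      rw [Set.mem_Ioi] at hw
      have h' : deriv ℓ (m - w * s) ≤ deriv ℓ (m + w * s) := hmono (by nlinarith)
      exact mul_nonneg (mul_nonneg hw.le (sub_nonneg.2 h')) (gaussianPDFReal_nonneg 0 1 w)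
  constructor
  · apply strictMonoOn_of_deriv_pos (convex_Ioi 0)
    · exact fun s hs => ((hD s hs).continuousAt).continuousWithinAt
    · intro s hs
      rw [interior_Ioi] at hs
      rw [(hD s hs).deriv, hEq s]
      exact hpos s hs
  · intro s hs
    exact ⟨hEq s ▸ hD s hs, hpos s hs⟩
end

section
/- Let Z be an n×p real matrix, σ > 0, and let V be a p×r matrix with orthonormal columns such that every row of Z lies in the column span of V (i.e., Z·V·Vᵀ = Z). Then (ZᵀZ + nσ·VVᵀ)⁺ (Zᵀ𝟙) = (ZᵀZ + nσ·I)⁻¹ (Zᵀ𝟙), where M⁺ denotes the Moore–Penrose pseudoinverse, I is the p×p identity, and 𝟙 ∈ ℝⁿ is the all-ones vector. -/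
open Matrix

/-- Abstract key lemma: if `Q` is a symmetric idempotent, `A` invertible with
`A*Q = Q*A = M`, and `P` satisfies the Penrose conditions for `M`, then `P*Q = A⁻¹*Q`. -/
lemma pseudoinverse_ridge_key {p : ℕ} (M P A Q : Matrix (Fin p) (Fin p) ℝ)
    (hQs : Qᵀ = Q) (hQQ : Q * Q = Q) (hAQ : A * Q = M) (hQA : Q * A = M)
    (hAinvA : A⁻¹ * A = 1) (hAAinv : A * A⁻¹ = 1)
    (h1 : M * P * M = M)
    (h3 : (M * P)ᵀ = M * P) (h4 : (P * M)ᵀ = P * M) :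
    P * Q = A⁻¹ * Q := by
  have hMAinv : M * A⁻¹ = Q := by
    rw [← hQA, mul_assoc, hAAinv, mul_one]
  have hAinvM : A⁻¹ * M = Q := by
    rw [← hAQ, ← mul_assoc, hAinvA, one_mul]
  have hQM : Q * M = M := by
    rw [← hQA, ← mul_assoc, hQQ]
  have hMQ : M * Q = M := by
    rw [← hAQ, mul_assoc, hQQ]
  have hMPQ : M * P * Q = M * P := by
    have h : Q * (M * P) = M * P := by rw [← mul_assoc, hQM]
    have h' := congrArg Matrix.transpose h
    rwa [transpose_mul, h3, hQs] at h'
  have hMP : M * P = Q := by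
    have h : Q = M * P * Q := by
      calc Q = M * A⁻¹ := hMAinv.symm
      _ = (M * P * M) * A⁻¹ := by rw [h1]
      _ = M * P * (M * A⁻¹) := by rw [mul_assoc]
      _ = M * P * Q := by rw [hMAinv]
    rw [h, hMPQ]
  have hQPM : Q * (P * M) = P * M := by
    have h : (P * M) * Q = P * M := by rw [mul_assoc, hMQ]
    have h' := congrArg Matrix.transpose h
    rwa [transpose_mul, h4, hQs] at h'
  have hPM : P * M = Q := by
    have h : Q = Q * (P * M) := by
      calc Q = A⁻¹ * M := hAinvM.symm
      _ = A⁻¹ * (M * P * M) := by rw [h1]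
      _ = (A⁻¹ * M) * (P * M) := by noncomm_ring
      _ = Q * (P * M) := by rw [hAinvM]
    rw [h, hQPM]
  have hQAinv : Q * A⁻¹ = A⁻¹ * Q := by
    calc Q * A⁻¹ = (A⁻¹ * A) * Q * A⁻¹ := by rw [hAinvA, one_mul]
    _ = A⁻¹ * (A * Q) * A⁻¹ := by rw [mul_assoc A⁻¹ A Q]
    _ = A⁻¹ * (Q * A) * A⁻¹ := by rw [hAQ, hQA]
    _ = A⁻¹ * Q * (A * A⁻¹) := by rw [mul_assoc, mul_assoc, mul_assoc]
    _ = A⁻¹ * Q := by rw [hAAinv, mul_one]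
  calc P * Q = P * (M * A⁻¹) := by rw [hMAinv]
  _ = (P * M) * A⁻¹ := by rw [mul_assoc]
  _ = Q * A⁻¹ := by rw [hPM]
  _ = A⁻¹ * Q := hQAinv

/-- If every row of `Z` lies in the column span of `V` (where `VᵀV = I`), then the
Moore–Penrose pseudoinverse `(ZᵀZ + nσ·VVᵀ)⁺` applied to `Zᵀ𝟙` agrees with
`(ZᵀZ + nσ·I)⁻¹ Zᵀ𝟙`. Here `P` is any matrix satisfying the four Penrose conditions
for `M = ZᵀZ + nσ·VVᵀ` (which uniquely characterize the pseudoinverse). -/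
theorem pseudoinverse_ridge_identity
    {n p r : ℕ} (Z : Matrix (Fin n) (Fin p) ℝ) (V : Matrix (Fin p) (Fin r) ℝ)
    (σ : ℝ) (hσ : 0 < σ) (hn : 1 ≤ n)
    (hV : Vᵀ * V = 1) (hZV : Z * V * Vᵀ = Z)
    (P : Matrix (Fin p) (Fin p) ℝ)
    (M : Matrix (Fin p) (Fin p) ℝ)
    (hM : M = Zᵀ * Z + (n : ℝ) • (σ • (V * Vᵀ)))
    (h1 : M * P * M = M) (h2 : P * M * P = P)
    (h3 : (M * P)ᵀ = M * P) (h4 : (P * M)ᵀ = P * M) :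
    P *ᵥ (Zᵀ *ᵥ (fun _ => 1)) =
      (Zᵀ * Z + (n : ℝ) • (σ • (1 : Matrix (Fin p) (Fin p) ℝ)))⁻¹ *ᵥ
        (Zᵀ *ᵥ (fun _ => 1)) := by
  have hcpos : (0:ℝ) < (n : ℝ) * σ :=
    mul_pos (by exact_mod_cast Nat.lt_of_lt_of_le Nat.zero_lt_one hn) hσ
  -- notation
  let Q : Matrix (Fin p) (Fin p) ℝ := V * Vᵀ
  let A : Matrix (Fin p) (Fin p) ℝ :=
    Zᵀ * Z + (n : ℝ) • (σ • (1 : Matrix (Fin p) (Fin p) ℝ))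
  have hQdef : Q = V * Vᵀ := rfl
  have hAdef : A = Zᵀ * Z + (n : ℝ) • (σ • (1 : Matrix (Fin p) (Fin p) ℝ)) := rfl
  have hQs : Qᵀ = Q := by rw [hQdef, transpose_mul, transpose_transpose]
  have hQQ : Q * Q = Q := by
    rw [hQdef, Matrix.mul_assoc, ← Matrix.mul_assoc Vᵀ V Vᵀ, hV, Matrix.one_mul]
  have hZQ : Z * Q = Z := by rw [hQdef, ← Matrix.mul_assoc, hZV]
  have hQZt : Q * Zᵀ = Zᵀ := by
    have := congrArg Matrix.transpose hZQ
    rwa [transpose_mul, hQs] at this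
  have hZZQ : Zᵀ * Z * Q = Zᵀ * Z := by rw [Matrix.mul_assoc, hZQ]
  have hQZZ : Q * (Zᵀ * Z) = Zᵀ * Z := by rw [← Matrix.mul_assoc, hQZt]
  -- A is positive definite, hence invertible
  have hApd : A.PosDef := by
    refine Matrix.PosDef.of_dotProduct_mulVec_pos ?_ ?_
    · show Aᴴ = A
      rw [conjTranspose_eq_transpose_of_trivial, hAdef, transpose_add,
        transpose_smul, transpose_smul, transpose_one, transpose_mul,
        transpose_transpose]
    · intro x hx
      have key : star x ⬝ᵥ (A *ᵥ x) =
          (Z *ᵥ x) ⬝ᵥ (Z *ᵥ x) + ((n : ℝ) * σ) * (x ⬝ᵥ x) := by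
        rw [hAdef, add_mulVec, dotProduct_add]
        congr 1
        · rw [← mulVec_mulVec, dotProduct_mulVec]
          simp [vecMul_transpose]
        · simp [smul_smul, smul_mulVec, mul_assoc]
      rw [key]
      have hnn : (0:ℝ) ≤ (Z *ᵥ x) ⬝ᵥ (Z *ᵥ x) := by
        have := dotProduct_star_self_nonneg (Z *ᵥ x)
        simpa using this
      have hpp : (0:ℝ) < x ⬝ᵥ x := by
        have := dotProduct_star_self_pos_iff (v := x) |>.mpr hx
        simpa using this
      nlinarith
  have hAunit : IsUnit A.det := hApd.det_pos.ne'.isUnit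
  have hAinvA : A⁻¹ * A = 1 := nonsing_inv_mul A hAunit
  have hAAinv : A * A⁻¹ = 1 := mul_nonsing_inv A hAunit
  -- relation between M, A, Q
  have hAQ : A * Q = M := by
    rw [hAdef, hM, add_mul, hZZQ, smul_mul_assoc, smul_mul_assoc, one_mul, hQdef]
  have hQA : Q * A = M := by
    rw [hAdef, hM, mul_add, hQZZ, mul_smul_comm, mul_smul_comm, mul_one, hQdef]
  have hPQ : P * Q = A⁻¹ * Q :=
    pseudoinverse_ridge_key M P A Q hQs hQQ hAQ hQA hAinvA hAAinv h1 h3 h4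
  have hfinal : P * Zᵀ = A⁻¹ * Zᵀ := by
    conv_lhs => rw [← hQZt, ← Matrix.mul_assoc P Q Zᵀ, hPQ, Matrix.mul_assoc A⁻¹ Q Zᵀ, hQZt]
  rw [mulVec_mulVec, mulVec_mulVec, hfinal]
end
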